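/- Let Δ ⊂ ℝⁿ be a simple polytope written as the intersection of half-spaces {x : ⟨η_i, x⟩ ≤ κ_i} for i = 1,…,N, and let H be a linear functional on ℝⁿ. If the function κ ↦ ⟨H, c_Δ(κ)⟩ (where c_Δ(κ) is the center of mass of Δ(κ)) equals Σ_i β_i κ_i on the chamber of Δ, then H = Σ_i β_i η_i. -/

import Mathlib

open MeasureTheory Function Set

noncomputable section

namespace MassLinearPaper

def dotp {n : ℕ} (v x : Fin n → ℝ) : ℝ := ∑ j, v j * x j

def polytope {n N : ℕ} (η : Fin N → Fin n → ℝ) (κ : Fin N → ℝ) : Set (Fin n → ℝ) :=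
  {x | ∀ i, dotp (η i) x ≤ κ i}

def facet {n N : ℕ} (η : Fin N → Fin n → ℝ) (κ : Fin N → ℝ) (i : Fin N) : Set (Fin n → ℝ) :=
  {x ∈ polytope η κ | dotp (η i) x = κ i}

/-- A polytope is simple if at each point the active conormals are linearly independent. -/
def IsSimplePoly {n N : ℕ} (η : Fin N → Fin n → ℝ) (κ : Fin N → ℝ) : Prop :=
  ∀ x ∈ polytope η κ,
    LinearIndependent ℝ (fun i : {i : Fin N // dotp (η i) x = κ i} => η i.1)

/-- Two support vectors give analogous polytopes: the same collections of facets intersect. -/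
def Analogous {n N : ℕ} (η : Fin N → Fin n → ℝ) (κ κ' : Fin N → ℝ) : Prop :=
  ∀ I : Finset (Fin N),
    (⋂ i ∈ I, facet η κ' i).Nonempty ↔ (⋂ i ∈ I, facet η κ i).Nonempty

/-- The chamber of Δ(κ). -/
def chamber {n N : ℕ} (η : Fin N → Fin n → ℝ) (κ : Fin N → ℝ) : Set (Fin N → ℝ) :=
  connectedComponentIn {κ' | IsSimplePoly η κ' ∧ Analogous η κ κ'} κ

/-- Standing hypotheses: simple, bounded, nonempty interior, all facets nonempty. -/
def GoodPolytope {n N : ℕ} (η : Fin N → Fin n → ℝ) (κ : Fin N → ℝ) : Prop :=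
  IsSimplePoly η κ ∧ Bornology.IsBounded (polytope η κ) ∧
    (interior (polytope η κ)).Nonempty ∧ ∀ i, (facet η κ i).Nonempty

/-- The center of mass of Δ(κ). -/
def centroid {n N : ℕ} (η : Fin N → Fin n → ℝ) (κ : Fin N → ℝ) : Fin n → ℝ :=
  ⨍ x in polytope η κ, x

/-- The volume of Δ(κ) as a function of κ. -/
def volFn {n N : ℕ} (η : Fin N → Fin n → ℝ) : (Fin N → ℝ) → ℝ :=
  fun κ => (volume (polytope η κ)).toReal

/-- Partial derivative with respect to the i-th support number. -/
def pd {N : ℕ} (i : Fin N) (f : (Fin N → ℝ) → ℝ) : (Fin N → ℝ) → ℝ :=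
  fun κ => fderiv ℝ f κ (Pi.single i 1)

def face {n N : ℕ} (η : Fin N → Fin n → ℝ) (κ : Fin N → ℝ) (S : Finset (Fin N)) :
    Set (Fin n → ℝ) :=
  ⋂ i ∈ S, facet η κ i

/-- Centroid of a face with respect to Hausdorff measure of the appropriate dimension. -/
def faceCentroid {n N : ℕ} (η : Fin N → Fin n → ℝ) (κ : Fin N → ℝ) (S : Finset (Fin N)) :
    Fin n → ℝ :=
  ⨍ x in face η κ S, x ∂(μH[(n : ℝ) - S.card])

/-- The facet `F i` is H-symmetric: `⟨H, c(κ)⟩` does not depend on `κ i` on the chamber. -/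
def SymmFacet {n N : ℕ} (η : Fin N → Fin n → ℝ) (κ : Fin N → ℝ) (H : Fin n → ℝ)
    (i : Fin N) : Prop :=
  ∀ κ₁ ∈ chamber η κ, ∀ κ₂ ∈ chamber η κ, (∀ j, j ≠ i → κ₁ j = κ₂ j) →
    dotp H (centroid η κ₁) = dotp H (centroid η κ₂)

/-- H is mass linear with coefficients γ and constant C. -/
def MassLinear {n N : ℕ} (η : Fin N → Fin n → ℝ) (κ : Fin N → ℝ) (H : Fin n → ℝ)
    (γ : Fin N → ℝ) (C : ℝ) : Prop :=
  ∀ κ' ∈ chamber η κ, dotp H (centroid η κ') = ∑ i, γ i * κ' i + C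

/-- A facet is pervasive if it meets every other facet. -/
def Pervasive {n N : ℕ} (η : Fin N → Fin n → ℝ) (κ : Fin N → ℝ) (i : Fin N) : Prop :=
  ∀ j, j ≠ i → (facet η κ i ∩ facet η κ j).Nonempty

/-- A facet is flat if the conormals of all other facets meeting it lie in a hyperplane. -/
def FlatFacet {n N : ℕ} (η : Fin N → Fin n → ℝ) (κ : Fin N → ℝ) (i : Fin N) : Prop :=
  ∃ ξ : Fin n → ℝ, ξ ≠ 0 ∧
    ∀ j, j ≠ i → (facet η κ i ∩ facet η κ j).Nonempty → dotp (η j) ξ = 0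

/-- Equivalence of facets, via the criterion of Lemma 4.4. -/
def FacetEquiv {n N : ℕ} (η : Fin N → Fin n → ℝ) (i j : Fin N) : Prop :=
  i = j ∨ ∃ ξ : Fin n → ℝ, dotp (η i) ξ = 1 ∧ dotp (η j) ξ = -1 ∧
    ∀ k, k ≠ i → k ≠ j → dotp (η k) ξ = 0

def IsEquivClass {n N : ℕ} (η : Fin N → Fin n → ℝ) (I : Finset (Fin N)) : Prop :=
  I.Nonempty ∧ (∀ i ∈ I, ∀ j ∈ I, FacetEquiv η i j) ∧
    ∀ i ∈ I, ∀ j, FacetEquiv η i j → j ∈ I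

/-- H is inessential. -/
def Inessential {n N : ℕ} (η : Fin N → Fin n → ℝ) (H : Fin n → ℝ) : Prop :=
  ∃ β : Fin N → ℝ, H = ∑ i, β i • η i ∧
    ∀ I : Finset (Fin N), IsEquivClass η I → ∑ i ∈ I, β i = 0

end MassLinearPaper

open MassLinearPaper

namespace MLAux

variable {n N : ℕ}

lemma dotp_sub (v x t : Fin n → ℝ) : dotp v (x - t) = dotp v x - dotp v t := by
  simp [dotp, mul_sub, Finset.sum_sub_distrib]

/-- translated support numbers -/
def shift (η : Fin N → Fin n → ℝ) (κ : Fin N → ℝ) (t : Fin n → ℝ) : Fin N → ℝ :=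
  fun i => κ i + dotp (η i) t

lemma mem_polytope_shift (η : Fin N → Fin n → ℝ) (κ : Fin N → ℝ) (t x : Fin n → ℝ) :
    x ∈ polytope η (shift η κ t) ↔ x - t ∈ polytope η κ := by
  simp only [polytope, shift, Set.mem_setOf_eq, dotp_sub]
  exact forall_congr' fun i => by constructor <;> intro h <;> linarith

lemma polytope_shift (η : Fin N → Fin n → ℝ) (κ : Fin N → ℝ) (t : Fin n → ℝ) :
    polytope η (shift η κ t) = (fun x => x + t) '' polytope η κ := by
  ext x
  rw [mem_polytope_shift]
  constructor
  · intro h; exact ⟨x - t, h, sub_add_cancel x t⟩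
  · rintro ⟨y, hy, rfl⟩; simpa using hy

lemma mem_facet_shift (η : Fin N → Fin n → ℝ) (κ : Fin N → ℝ) (t x : Fin n → ℝ) (i : Fin N) :
    x ∈ facet η (shift η κ t) i ↔ x - t ∈ facet η κ i := by
  simp only [facet, Set.mem_setOf_eq, mem_polytope_shift, shift, dotp_sub]
  constructor <;> rintro ⟨h1, h2⟩ <;> exact ⟨h1, by linarith⟩

lemma shift_mem_S (η : Fin N → Fin n → ℝ) (κ : Fin N → ℝ) (hs : IsSimplePoly η κ)
    (t : Fin n → ℝ) :
    IsSimplePoly η (shift η κ t) ∧ Analogous η κ (shift η κ t) := by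
  constructor
  · intro x hx
    rw [mem_polytope_shift] at hx
    have h : ∀ i : Fin N, dotp (η i) (x - t) = κ i ↔ dotp (η i) x = shift η κ t i := by
      intro i; rw [dotp_sub, shift]; constructor <;> intro h <;> linarith
    have := hs (x - t) hx
    exact (linearIndependent_equiv (Equiv.subtypeEquivRight h)).mp this
  · intro I
    constructor
    · rintro ⟨x, hx⟩
      refine ⟨x - t, ?_⟩
      simp only [Set.mem_iInter] at hx ⊢
      intro i hi
      exact (mem_facet_shift η κ t x i).mp (hx i hi)
    · rintro ⟨x, hx⟩
      refine ⟨x + t, ?_⟩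
      simp only [Set.mem_iInter] at hx ⊢
      intro i hi
      rw [mem_facet_shift]
      simpa using hx i hi

lemma shift_mem_chamber (η : Fin N → Fin n → ℝ) (κ : Fin N → ℝ) (hs : IsSimplePoly η κ)
    (t : Fin n → ℝ) : shift η κ t ∈ chamber η κ := by
  set S : Set (Fin N → ℝ) := {κ' | IsSimplePoly η κ' ∧ Analogous η κ κ'} with hS
  have hseg : (fun s : ℝ => shift η κ (s • t)) '' Set.Icc 0 1 ⊆ S := by
    rintro _ ⟨s, _, rfl⟩
    exact shift_mem_S η κ hs (s • t)
  have hcont : Continuous (fun s : ℝ => shift η κ (s • t)) := by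
    refine continuous_pi fun i => ?_
    have heq : (fun s : ℝ => shift η κ (s • t) i) = fun s => κ i + s * dotp (η i) t := by
      funext s
      simp only [shift, dotp, Finset.mul_sum, Pi.smul_apply, smul_eq_mul]
      congr 1
      refine Finset.sum_congr rfl fun j _ => by ring
    rw [heq]; continuity
  have hpc : IsPreconnected ((fun s : ℝ => shift η κ (s • t)) '' Set.Icc 0 1) :=
    (isPreconnected_Icc).image _ hcont.continuousOn
  have h0 : shift η κ ((0:ℝ) • t) = κ := by funext i; simp [shift, dotp]
  have hκmem : κ ∈ (fun s : ℝ => shift η κ (s • t)) '' Set.Icc 0 1 :=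
    ⟨0, by simp, h0⟩
  have hsub := hpc.subset_connectedComponentIn hκmem hseg
  have h1 : shift η κ ((1:ℝ) • t) = shift η κ t := by simp
  have : shift η κ t ∈ connectedComponentIn S κ := by
    rw [← h1]; exact hsub ⟨1, by simp, rfl⟩
  exact this

lemma polytope_isClosed (η : Fin N → Fin n → ℝ) (κ : Fin N → ℝ) :
    IsClosed (polytope η κ) := by
  have h : polytope η κ = ⋂ i, {x | dotp (η i) x ≤ κ i} := by
    ext x; simp [polytope]
  rw [h]
  exact isClosed_iInter fun i => isClosed_le (by unfold dotp; continuity) continuous_const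

lemma centroid_shift (η : Fin N → Fin n → ℝ) (κ : Fin N → ℝ)
    (hb : Bornology.IsBounded (polytope η κ)) (hi : (interior (polytope η κ)).Nonempty)
    (t : Fin n → ℝ) :
    centroid η (shift η κ t) = centroid η κ + t := by
  have hc : IsCompact (polytope η κ) :=
    Metric.isCompact_of_isClosed_isBounded (polytope_isClosed η κ) hb
  have hvlt : volume (polytope η κ) < ⊤ := hc.measure_lt_top
  have hvpos : 0 < volume (polytope η κ) :=
    lt_of_lt_of_le (isOpen_interior.measure_pos volume hi) (measure_mono interior_subset)
  set v : ℝ := (volume (polytope η κ)).toReal with hv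
  have hvpos' : 0 < v := ENNReal.toReal_pos hvpos.ne' hvlt.ne
  have himg : (fun x : Fin n → ℝ => x + t) '' polytope η κ
      = (fun x => x + (-t)) ⁻¹' polytope η κ := by
    ext x
    constructor
    · rintro ⟨y, hy, rfl⟩; simpa using hy
    · intro h; exact ⟨x + -t, h, neg_add_cancel_right x t⟩
  have hve : volume (polytope η (shift η κ t)) = volume (polytope η κ) := by
    rw [polytope_shift, himg]
    exact measure_preimage_add_right volume (-t) _
  have hint : ∫ x in polytope η (shift η κ t), x
      = (∫ x in polytope η κ, x) + v • t := by
    rw [polytope_shift,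
      (measurePreserving_add_right volume t).setIntegral_image_emb
        ((MeasurableEquiv.addRight t).measurableEmbedding) _ (polytope η κ)]
    have h1 : IntegrableOn (fun x : Fin n → ℝ => x) (polytope η κ) volume :=
      continuous_id.continuousOn.integrableOn_compact hc
    have h2 : IntegrableOn (fun _ : Fin n → ℝ => t) (polytope η κ) volume :=
      integrableOn_const hvlt.ne
    rw [MeasureTheory.integral_add h1 h2, setIntegral_const]
    rfl
  unfold centroid
  rw [setAverage_eq, setAverage_eq, measureReal_def, measureReal_def, hve, hint, ← hv, smul_add, smul_smul,
    inv_mul_cancel₀ hvpos'.ne', one_smul]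

lemma dotp_centroid_shift_eq (η : Fin N → Fin n → ℝ) (κ : Fin N → ℝ) (H : Fin n → ℝ)
    (β : Fin N → ℝ) (hΔ : GoodPolytope η κ)
    (hlin : ∀ κ' ∈ chamber η κ, dotp H (centroid η κ') = ∑ i, β i * κ' i)
    (t : Fin n → ℝ) : dotp H t = ∑ i, β i * dotp (η i) t := by
  obtain ⟨hs, hb, hi, _⟩ := hΔ
  have hκ : κ ∈ chamber η κ :=
    mem_connectedComponentIn ⟨hs, fun I => Iff.rfl⟩
  have h1 := hlin κ hκ
  have h2 := hlin (shift η κ t) (shift_mem_chamber η κ hs t)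
  rw [centroid_shift η κ hb hi t] at h2
  have h3 : dotp H (centroid η κ + t) = dotp H (centroid η κ) + dotp H t := by
    simp [dotp, mul_add, Finset.sum_add_distrib]
  rw [h3, h1] at h2
  have h4 : ∑ i, β i * shift η κ t i = ∑ i, β i * κ i + ∑ i, β i * dotp (η i) t := by
    simp [shift, mul_add, Finset.sum_add_distrib]
  rw [h4] at h2
  linarith

end MLAux

/-- If `κ ↦ ⟨H, c_Δ(κ)⟩` equals `Σ β_i κ_i` on the chamber, then `H = Σ β_i η_i`. -/
theorem stmt0 {n N : ℕ} (η : Fin N → Fin n → ℝ) (κ : Fin N → ℝ) (H : Fin n → ℝ)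
    (β : Fin N → ℝ) (hΔ : GoodPolytope η κ)
    (hlin : ∀ κ' ∈ chamber η κ, dotp H (centroid η κ') = ∑ i, β i * κ' i) :
    H = ∑ i, β i • η i := by
  funext j
  have key := MLAux.dotp_centroid_shift_eq η κ H β hΔ hlin (Pi.single j 1)
  have hL : dotp H (Pi.single j 1) = H j := by
    simp [dotp, Pi.single_apply, Finset.sum_ite_eq', mul_ite]
  have hR : ∀ i, dotp (η i) (Pi.single j 1) = η i j := by
    intro i
    simp [dotp, Pi.single_apply, Finset.sum_ite_eq', mul_ite]
  rw [hL] at key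
  simp only [hR] at key
  rw [key]
  simp [Finset.sum_apply]
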